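/- Let g be a natural number with g ≥ 1 and α ∈ (0,1) a real number. For 1 ≤ k ≤ g define b_k = Σ_{j=1}^k α/(g·(1+j)). For a real number p define i(p) = #{k ∈ {1,…,g} : p > b_k} and E(p) = g/(α·(i(p)+1)). Define T : ℝ → ℝ by T(z) = g/⌈g/z⌉ if z ≥ 1 and T(z) = 0 if z < 1, where ⌈·⌉ denotes the ceiling. If X is uniformly distributed on (0,1], then E[T(α·E(X))] ≤ α. -/

import Mathlib

open MeasureTheory Finset

theorem stmt_12 (g : ℕ) (hg : 1 ≤ g) (α : ℝ) (hα : α ∈ Set.Ioo (0 : ℝ) 1)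
    (b : ℕ → ℝ) (hbdef : ∀ k, b k = ∑ j ∈ Finset.Icc 1 k, α / (g * (1 + (j : ℝ))))
    (i : ℝ → ℕ) (hidef : ∀ p : ℝ, i p = ((Finset.Icc 1 g).filter (fun k => b k < p)).card)
    (E : ℝ → ℝ) (hEdef : ∀ p : ℝ, E p = (g : ℝ) / (α * ((i p : ℝ) + 1)))
    (T : ℝ → ℝ)
    (hT : ∀ z : ℝ, T z = if 1 ≤ z then (g : ℝ) / ((⌈(g : ℝ) / z⌉ : ℤ) : ℝ) else 0) :
    ∫ x in Set.Ioc (0 : ℝ) 1, T (α * E x) ≤ α := by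
  obtain ⟨hα0, hα1⟩ := hα
  have hg0 : (0 : ℝ) < g := by exact_mod_cast Nat.pos_of_ne_zero (by omega)
  -- basic facts about b
  have hb0 : b 0 = 0 := by simp [hbdef]
  have hbm : Monotone b := by
    intro k m hkm
    rw [hbdef, hbdef]
    apply Finset.sum_le_sum_of_subset_of_nonneg (Finset.Icc_subset_Icc_right hkm)
    intro j _ _
    positivity
  have hbsucc : ∀ k : ℕ, b (k + 1) = b k + α / (g * ((k : ℝ) + 2)) := by
    intro k
    rw [hbdef, hbdef, Finset.sum_Icc_succ_top (by omega : 1 ≤ k + 1)]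
    push_cast
    ring
  have hbnonneg : ∀ k, 0 ≤ b k := fun k => hb0 ▸ hbm (Nat.zero_le k)
  have hbg1 : b g < 1 := by
    have h1 : b g ≤ ∑ j ∈ Finset.Icc 1 g, α / (g * 2) := by
      rw [hbdef]
      apply Finset.sum_le_sum
      intro j hj
      rw [Finset.mem_Icc] at hj
      apply div_le_div_of_nonneg_left hα0.le (by positivity)
      have : (1 : ℝ) ≤ j := by exact_mod_cast hj.1
      nlinarith
    have h2 : ∑ j ∈ Finset.Icc 1 g, α / (g * 2) = g * (α / (g * 2)) := by
      rw [Finset.sum_const, Nat.card_Icc]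
      simp
    have h3 : (g : ℝ) * (α / (g * 2)) = α / 2 := by field_simp
    have : b g ≤ α / 2 := by rw [h2, h3] at h1; exact h1
    linarith
  -- value of i on pieces
  have hi1 : ∀ k, k < g → ∀ x ∈ Set.Ioc (b k) (b (k + 1)), i x = k := by
    intro k hk x hx
    rw [hidef]
    have hfilter : (Finset.Icc 1 g).filter (fun m => b m < x) = Finset.Icc 1 k := by
      ext m
      simp only [Finset.mem_filter, Finset.mem_Icc]
      constructor
      · rintro ⟨⟨h1m, hmg⟩, hbmx⟩
        refine ⟨h1m, ?_⟩
        by_contra h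
        have hkm : k + 1 ≤ m := by omega
        have : b (k + 1) ≤ b m := hbm hkm
        have : x ≤ b m := le_trans hx.2 this
        linarith
      · rintro ⟨h1m, hmk⟩
        exact ⟨⟨h1m, by omega⟩, lt_of_le_of_lt (hbm hmk) hx.1⟩
    rw [hfilter, Nat.card_Icc]
    omega
  have hi2 : ∀ x : ℝ, b g < x → i x = g := by
    intro x hx
    rw [hidef]
    have hfilter : (Finset.Icc 1 g).filter (fun m => b m < x) = Finset.Icc 1 g := by
      apply Finset.filter_true_of_mem
      intro m hm
      rw [Finset.mem_Icc] at hm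
      exact lt_of_le_of_lt (hbm hm.2) hx
    rw [hfilter, Nat.card_Icc]
    omega
  -- value of the integrand
  have hval : ∀ x : ℝ, ∀ k : ℕ, i x = k → k < g → T (α * E x) = (g : ℝ) / ((k : ℝ) + 1) := by
    intro x k hik hk
    have hk1 : (0 : ℝ) < (k : ℝ) + 1 := by positivity
    have hEx : α * E x = (g : ℝ) / ((k : ℝ) + 1) := by
      rw [hEdef, hik]
      field_simp
    rw [hT, hEx]
    have hge1 : (1 : ℝ) ≤ (g : ℝ) / ((k : ℝ) + 1) := by
      rw [le_div_iff₀ hk1]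
      have : (k : ℝ) + 1 ≤ g := by exact_mod_cast Nat.succ_le_of_lt hk
      linarith
    rw [if_pos hge1]
    have hdd : (g : ℝ) / ((g : ℝ) / ((k : ℝ) + 1)) = (k : ℝ) + 1 := by
      field_simp
    rw [hdd]
    have : ((k : ℝ) + 1) = ((k + 1 : ℕ) : ℝ) := by push_cast; ring
    rw [this, Int.ceil_natCast]
    push_cast
    ring
  have hval2 : ∀ x : ℝ, i x = g → T (α * E x) = 0 := by
    intro x hix
    have hEx : α * E x = (g : ℝ) / ((g : ℝ) + 1) := by
      rw [hEdef, hix]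
      field_simp
    rw [hT, hEx, if_neg]
    rw [not_le, div_lt_one (by positivity)]
    linarith
  -- integral over each piece
  have hpiece : ∀ k, k < g →
      IntegrableOn (fun x => T (α * E x)) (Set.Ioc (b k) (b (k + 1))) volume ∧
      ∫ x in Set.Ioc (b k) (b (k + 1)), T (α * E x) =
        ((g : ℝ) / ((k : ℝ) + 1)) * (b (k + 1) - b k) := by
    intro k hk
    have hmeas : MeasurableSet (Set.Ioc (b k) (b (k + 1))) := measurableSet_Ioc
    have heq : Set.EqOn (fun x => T (α * E x)) (fun _ => (g : ℝ) / ((k : ℝ) + 1))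
        (Set.Ioc (b k) (b (k + 1))) := by
      intro x hx
      exact hval x k (hi1 k hk x hx) hk
    constructor
    · rw [integrableOn_congr_fun heq hmeas]
      exact integrableOn_const measure_Ioc_lt_top.ne
    · rw [setIntegral_congr_fun hmeas heq, setIntegral_const]
      rw [measureReal_def, Real.volume_Ioc, ENNReal.toReal_ofReal (by linarith [hbm (Nat.le_succ k)])]
      rw [smul_eq_mul]
      ring
  -- induction: integral over Ioc 0 (b n)
  have key : ∀ n, n ≤ g →
      IntegrableOn (fun x => T (α * E x)) (Set.Ioc 0 (b n)) volume ∧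
      ∫ x in Set.Ioc 0 (b n), T (α * E x) =
        ∑ k ∈ Finset.range n, ((g : ℝ) / ((k : ℝ) + 1)) * (b (k + 1) - b k) := by
    intro n
    induction n with
    | zero => intro _; simp [hb0]
    | succ n ih =>
      intro hn
      have hng : n < g := hn
      obtain ⟨ih1, ih2⟩ := ih (le_of_lt hng)
      obtain ⟨hp1, hp2⟩ := hpiece n hng
      have hunion : Set.Ioc (0 : ℝ) (b n) ∪ Set.Ioc (b n) (b (n + 1)) =
          Set.Ioc 0 (b (n + 1)) :=
        Set.Ioc_union_Ioc_eq_Ioc (hbnonneg n) (hbm (Nat.le_succ n))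
      have hdisj : Disjoint (Set.Ioc (0 : ℝ) (b n)) (Set.Ioc (b n) (b (n + 1))) :=
        (Set.Ioc_disjoint_Ioc_of_le le_rfl)
      constructor
      · rw [← hunion]
        exact ih1.union hp1
      · rw [← hunion, setIntegral_union hdisj measurableSet_Ioc ih1 hp1, ih2, hp2,
          Finset.sum_range_succ]
  obtain ⟨kint, kval⟩ := key g le_rfl
  -- tail integral is zero
  have htail0 : Set.EqOn (fun x => T (α * E x)) (fun _ => (0 : ℝ)) (Set.Ioc (b g) 1) := by
    intro x hx
    exact hval2 x (hi2 x hx.1)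
  have htailint : IntegrableOn (fun x => T (α * E x)) (Set.Ioc (b g) 1) volume := by
    rw [integrableOn_congr_fun htail0 measurableSet_Ioc]
    exact integrableOn_const measure_Ioc_lt_top.ne
  have htail : ∫ x in Set.Ioc (b g) 1, T (α * E x) = 0 := by
    rw [setIntegral_congr_fun measurableSet_Ioc htail0]
    simp
  -- split the full integral
  have hunion : Set.Ioc (0 : ℝ) (b g) ∪ Set.Ioc (b g) 1 = Set.Ioc 0 1 :=
    Set.Ioc_union_Ioc_eq_Ioc (hbnonneg g) hbg1.le
  have hsplit : ∫ x in Set.Ioc (0 : ℝ) 1, T (α * E x) =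
      (∫ x in Set.Ioc (0 : ℝ) (b g), T (α * E x)) +
      ∫ x in Set.Ioc (b g) 1, T (α * E x) := by
    rw [← hunion, setIntegral_union (Set.Ioc_disjoint_Ioc_of_le le_rfl) measurableSet_Ioc kint htailint]
  rw [hsplit, htail, add_zero, kval]
  -- compute the sum
  have hterm : ∀ k : ℕ, ((g : ℝ) / ((k : ℝ) + 1)) * (b (k + 1) - b k) =
      α * ((1 : ℝ) / ((k : ℝ) + 1) - 1 / ((k : ℝ) + 2)) := by
    intro k
    rw [hbsucc k]
    have h1 : (0 : ℝ) < (k : ℝ) + 1 := by positivity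
    have h2 : (0 : ℝ) < (k : ℝ) + 2 := by positivity
    field_simp
    ring
  rw [Finset.sum_congr rfl (fun k _ => hterm k), ← Finset.mul_sum]
  have htel : ∑ k ∈ Finset.range g, ((1 : ℝ) / ((k : ℝ) + 1) - 1 / ((k : ℝ) + 2)) =
      1 - 1 / ((g : ℝ) + 1) := by
    have := Finset.sum_range_sub' (f := fun k : ℕ => (1 : ℝ) / ((k : ℝ) + 1)) (n := g)
    push_cast at this
    have h2 : ∑ k ∈ Finset.range g, ((1 : ℝ) / ((k : ℝ) + 1) - 1 / ((k : ℝ) + 2)) =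
        ∑ x ∈ Finset.range g, ((1 : ℝ) / ((x : ℝ) + 1) - 1 / ((x : ℝ) + 1 + 1)) := by
      apply Finset.sum_congr rfl
      intro k _
      ring_nf
    rw [h2, this]
    norm_num
  rw [htel]
  have h1 : (0 : ℝ) ≤ 1 / ((g : ℝ) + 1) := by positivity
  nlinarith
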